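/- There exists a nontrivial minimal blocking set of size 8 in PG(3,3). -/
import Mathlib


/-- A blocking set in `PG(n,q)` (points: 1-dimensional subspaces of `K^(n+1)`,
hyperplanes: `n`-dimensional subspaces): a set of points meeting every hyperplane. -/
def IsBlockingSet {K : Type*} [Field K] {n : ℕ}
    (B : Set (Projectivization K (Fin (n + 1) → K))) : Prop :=
  ∀ W : Submodule K (Fin (n + 1) → K), Module.finrank K W = n →
    ∃ x ∈ B, x.rep ∈ W

/-- A minimal blocking set: a blocking set no proper subset of which is a blocking set. -/
def IsMinimalBlockingSet {K : Type*} [Field K] {n : ℕ}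
    (B : Set (Projectivization K (Fin (n + 1) → K))) : Prop :=
  IsBlockingSet B ∧ ∀ B' ⊂ B, ¬ IsBlockingSet B'

/-- The linear span of (representative vectors of) a set of projective points;
the projective dimension `d(B)` is `finrank` of this span minus one. -/
noncomputable def projSpan {K : Type*} [Field K] {n : ℕ}
    (B : Set (Projectivization K (Fin (n + 1) → K))) : Submodule K (Fin (n + 1) → K) :=
  Submodule.span K (Projectivization.rep '' B)

open Projectivization Module


def vv : Fin 8 → Fin 4 → ZMod 3 :=
  ![![0,0,0,1], ![0,0,1,0], ![0,0,1,1], ![0,1,0,0], ![0,1,0,1], ![1,0,0,0], ![1,0,0,1], ![1,1,1,0]]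

def aa : Fin 8 → Fin 4 → ZMod 3 :=
  ![![1,1,2,0], ![1,1,0,1], ![1,1,2,1], ![1,0,1,1], ![1,2,1,1], ![0,1,1,1], ![1,2,2,2], ![1,1,1,1]]

lemma hvne : ∀ i, vv i ≠ 0 := by decide

lemma P3 : ∀ i k : Fin 8, i ≠ k → ∀ t : ZMod 3, t • vv k ≠ vv i := by decide

lemma P1 : ∀ a : Fin 4 → ZMod 3, a ≠ 0 → ∃ i, (∑ j, a j * vv i j) = 0 := by decide

lemma P2 : ∀ i : Fin 8, aa i ≠ 0 ∧ ∀ k, (∑ j, aa i j * vv k j) = 0 → k = i := by decide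

set_option maxHeartbeats 2000000 in
lemma P4 : ∀ i j k l : Fin 8, ¬(i ≠ j ∧ i ≠ k ∧ i ≠ l ∧ j ≠ k ∧ j ≠ l ∧ k ≠ l ∧
    (∃ s t : ZMod 3, s • vv i + t • vv j = vv k) ∧
    (∃ s t : ZMod 3, s • vv i + t • vv j = vv l)) := by decide

abbrev V4 : Type := Fin 4 → ZMod 3

/-- membership of the representative in a submodule is the same as membership of the vector -/
lemma rep_mem_iff (W : Submodule (ZMod 3) V4) (v : V4) (hv : v ≠ 0) :
    (Projectivization.mk (ZMod 3) v hv).rep ∈ W ↔ v ∈ W := by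
  obtain ⟨c, hc⟩ := exists_smul_eq_mk_rep (ZMod 3) v hv
  rw [← hc, Units.smul_def, W.smul_mem_iff c.ne_zero]

/-- the linear functional with coefficient vector `a` -/
def lf (a : Fin 4 → ZMod 3) : V4 →ₗ[ZMod 3] ZMod 3 :=
  ∑ j, a j • LinearMap.proj j

lemma lf_apply (a : Fin 4 → ZMod 3) (w : V4) : lf a w = ∑ j, a j * w j := by
  simp [lf, LinearMap.sum_apply, LinearMap.proj_apply, smul_eq_mul]

lemma lf_ne_zero {a : Fin 4 → ZMod 3} (ha : a ≠ 0) : lf a ≠ 0 := by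
  obtain ⟨j, hj⟩ := Function.ne_iff.mp ha
  intro h
  apply hj
  have := congrFun (congrArg DFunLike.coe h) (Pi.single j 1)
  rw [lf_apply] at this
  simpa [Pi.single_apply, Finset.sum_ite_eq'] using this

lemma finrank_V4 : finrank (ZMod 3) V4 = 4 := Module.finrank_fin_fun _

lemma finrank_ker {φ : V4 →ₗ[ZMod 3] ZMod 3} (h : φ ≠ 0) :
    finrank (ZMod 3) (LinearMap.ker φ) = 3 := by
  have h1 := LinearMap.finrank_range_add_finrank_ker φ
  rw [finrank_V4] at h1
  have hsurj : Function.Surjective φ := by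
    obtain ⟨w, hw⟩ : ∃ w, φ w ≠ 0 := by
      by_contra hc
      push_neg at hc
      exact h (by ext w; simp [hc])
    intro c
    exact ⟨(c * (φ w)⁻¹) • w, by rw [map_smul, smul_eq_mul, mul_assoc, inv_mul_cancel₀ hw, mul_one]⟩
  rw [LinearMap.range_eq_top.mpr hsurj, finrank_top, finrank_self] at h1
  omega

/-- every hyperplane is the kernel of one of our functionals -/
lemma hyperplane_eq_ker (W : Submodule (ZMod 3) V4) (hW : finrank (ZMod 3) W = 3) :
    ∃ a : Fin 4 → ZMod 3, a ≠ 0 ∧ W = LinearMap.ker (lf a) := by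
  have hne : W ≠ ⊤ := by
    intro h
    rw [h, finrank_top, finrank_V4] at hW
    omega
  obtain ⟨φ, hφ0, hφ⟩ := Submodule.exists_dual_map_eq_bot_of_lt_top
    (p := W) (lt_top_iff_ne_top.mpr hne) inferInstance
  have hle : W ≤ LinearMap.ker φ := by
    intro x hx
    rw [LinearMap.mem_ker]
    have : φ x ∈ W.map φ := Submodule.mem_map_of_mem hx
    rwa [hφ, Submodule.mem_bot] at this
  set a : Fin 4 → ZMod 3 := fun j => φ (Pi.single j 1) with ha
  have hφa : ∀ v : V4, φ v = lf a v := by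
    intro v
    rw [lf_apply]
    conv_lhs => rw [pi_eq_sum_univ v]
    rw [map_sum]
    congr 1
    ext j
    rw [map_smul, smul_eq_mul, mul_comm]
    congr 2
    ext k
    simp [Pi.single_apply, eq_comm]
  have haz : a ≠ 0 := by
    intro h0
    apply hφ0
    apply LinearMap.ext
    intro v
    rw [hφa, h0]
    simp [lf_apply]
  have hkereq : LinearMap.ker φ = LinearMap.ker (lf a) := by
    ext v
    simp [LinearMap.mem_ker, hφa v]
  refine ⟨a, haz, ?_⟩
  rw [hkereq] at hle
  exact Submodule.eq_of_le_of_finrank_eq hle (by rw [hW, finrank_ker (lf_ne_zero haz)])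

noncomputable def f (i : Fin 8) : Projectivization (ZMod 3) V4 :=
  Projectivization.mk (ZMod 3) (vv i) (hvne i)

lemma f_inj : Function.Injective f := by
  intro i k h
  by_contra hne
  rw [f, f, mk_eq_mk_iff'] at h
  obtain ⟨t, ht⟩ := h
  exact P3 i k hne t ht

def BB : Set (Projectivization (ZMod 3) V4) := Set.range f

lemma mem_ker_lf_iff (a : Fin 4 → ZMod 3) (v : V4) :
    v ∈ LinearMap.ker (lf a) ↔ (∑ j, a j * v j) = 0 := by
  rw [LinearMap.mem_ker, lf_apply]

lemma BB_blocking : IsBlockingSet BB := by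
  intro W hW
  obtain ⟨a, ha, rfl⟩ := hyperplane_eq_ker W hW
  obtain ⟨i, hi⟩ := P1 a ha
  exact ⟨f i, Set.mem_range_self i, (rep_mem_iff _ _ _).mpr ((mem_ker_lf_iff a (vv i)).mpr hi)⟩

lemma BB_minimal : IsMinimalBlockingSet BB := by
  refine ⟨BB_blocking, ?_⟩
  intro B' hss hblk
  obtain ⟨b, hbB, hbB'⟩ := Set.exists_of_ssubset hss
  obtain ⟨i, rfl⟩ := hbB
  obtain ⟨hai, htang⟩ := P2 i
  obtain ⟨x, hxB', hxW⟩ := hblk (LinearMap.ker (lf (aa i))) (finrank_ker (lf_ne_zero hai))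
  obtain ⟨k, rfl⟩ := hss.1 hxB'
  rw [f, rep_mem_iff, mem_ker_lf_iff] at hxW
  rw [htang k hxW] at hxB'
  exact hbB' hxB'

lemma BB_ncard : BB.ncard = 8 := by
  rw [BB, ← Set.image_univ, Set.ncard_image_of_injective _ f_inj, Set.ncard_univ]
  simp

lemma BB_noline :
    ¬ ∃ W : Submodule (ZMod 3) V4,
        finrank (ZMod 3) W = 2 ∧
        {x : Projectivization (ZMod 3) V4 | x.rep ∈ W} ⊆ BB := by
  rintro ⟨W, hW2, hsub⟩
  haveI : Module.Finite (ZMod 3) W := Module.Finite.iff_fg.mpr (by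
    exact Submodule.fg_def.mpr ⟨_, (Set.toFinite _), Submodule.span_eq W⟩)
  let b := finBasisOfFinrankEq (ZMod 3) W hW2
  set u : V4 := (b 0 : V4) with hu_def
  set w : V4 := (b 1 : V4) with hw_def
  have huW : u ∈ W := (b 0).2
  have hwW : w ∈ W := (b 1).2
  have hind : LinearIndependent (ZMod 3) fun i : Fin 2 => ((b i : W) : V4) :=
    (b.linearIndependent.map' W.subtype W.ker_subtype)
  have key : ∀ s t : ZMod 3, s • u + t • w = 0 → s = 0 ∧ t = 0 := by
    intro s t hst
    have h2 := Fintype.linearIndependent_iff.mp hind ![s, t]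
      (by rw [Fin.sum_univ_two]; simpa using hst)
    exact ⟨h2 0, h2 1⟩
  have hnz : ∀ s t : ZMod 3, ¬(s = 0 ∧ t = 0) → s • u + t • w ≠ 0 := by
    intro s t h hc
    exact h (key s t hc)
  -- the four points of the line
  have hu0 : u ≠ 0 := by
    have := hnz 1 0 (by simp)
    simpa using this
  have hw0 : w ≠ 0 := by
    have := hnz 0 1 (by simp)
    simpa using this
  have huw0 : u + w ≠ 0 := by
    have := hnz 1 1 (by simp)
    simpa using this
  have hu2w0 : u + (2 : ZMod 3) • w ≠ 0 := by
    have := hnz 1 2 (by decide)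
    simpa using this
  -- each is in BB; extract indices and scalars
  have getIdx : ∀ (p : V4) (hp : p ≠ 0), p ∈ W →
      ∃ (i : Fin 8) (c : ZMod 3), c • p = vv i ∧ f i = Projectivization.mk (ZMod 3) p hp := by
    intro p hp hpW
    have hmem : Projectivization.mk (ZMod 3) p hp ∈ BB := by
      apply hsub
      rw [Set.mem_setOf_eq, rep_mem_iff]
      exact hpW
    obtain ⟨i, hi⟩ := hmem
    have hi' := hi
    rw [f, mk_eq_mk_iff'] at hi
    obtain ⟨c, hc⟩ := hi
    exact ⟨i, c, hc, hi'⟩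
  obtain ⟨i1, c1, hc1, hf1⟩ := getIdx u hu0 huW
  obtain ⟨i2, c2, hc2, hf2⟩ := getIdx w hw0 hwW
  obtain ⟨i3, c3, hc3, hf3⟩ := getIdx (u + w) huw0 (W.add_mem huW hwW)
  obtain ⟨i4, c4, hc4, hf4⟩ := getIdx (u + (2 : ZMod 3) • w) hu2w0 (W.add_mem huW (W.smul_mem _ hwW))
  -- scalars are nonzero
  have hcz : ∀ (c : ZMod 3) (p : V4) (i : Fin 8), c • p = vv i → c ≠ 0 := by
    intro c p i hc h0
    rw [h0, zero_smul] at hc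
    exact hvne i hc.symm
  have hc1z := hcz c1 _ _ hc1
  have hc2z := hcz c2 _ _ hc2
  have hc3z := hcz c3 _ _ hc3
  have hc4z := hcz c4 _ _ hc4
  -- distinctness of the four points, hence of the indices
  have keydist : ∀ s t s' t' : ZMod 3, ∀ (h1 : s • u + t • w ≠ 0) (h2 : s' • u + t' • w ≠ 0),
      Projectivization.mk (ZMod 3) _ h1 = Projectivization.mk (ZMod 3) _ h2 →
      ∃ c : ZMod 3, c * s' = s ∧ c * t' = t := by
    intro s t s' t' h1 h2 h
    rw [mk_eq_mk_iff'] at h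
    obtain ⟨c, hc⟩ := h
    have hc' : (c * s') • u + (c * t') • w = s • u + t • w := by
      rw [← smul_smul, ← smul_smul, ← smul_add, hc]
    have : (c * s' - s) • u + (c * t' - t) • w = 0 := by
      rw [sub_smul, sub_smul, sub_add_sub_comm, hc', sub_self]
    obtain ⟨h1, h2⟩ := key _ _ this
    exact ⟨c, by rw [sub_eq_zero] at h1 h2; exact ⟨h1, h2⟩⟩
  have keydist' : ∀ (p p' : V4) (hp : p ≠ 0) (hp' : p' ≠ 0) (s t s' t' : ZMod 3),
      p = s • u + t • w → p' = s' • u + t' • w →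
      Projectivization.mk (ZMod 3) p hp = Projectivization.mk (ZMod 3) p' hp' →
      ∃ c : ZMod 3, c * s' = s ∧ c * t' = t := by
    intro p p' hp hp' s t s' t' hpe hpe' h
    subst hpe; subst hpe'
    exact keydist s t s' t' hp hp' h
  -- distinct points
  have hx12 : Projectivization.mk (ZMod 3) u hu0 ≠ Projectivization.mk (ZMod 3) w hw0 := by
    intro h
    obtain ⟨c, h1, h2⟩ := keydist' u w hu0 hw0 1 0 0 1 (by simp) (by simp) h
    exact (by decide : ∀ c : ZMod 3, ¬(c * 0 = 1 ∧ c * 1 = 0)) c ⟨h1, h2⟩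
  have hx13 : Projectivization.mk (ZMod 3) u hu0 ≠ Projectivization.mk (ZMod 3) (u + w) huw0 := by
    intro h
    obtain ⟨c, h1, h2⟩ := keydist' u (u + w) hu0 huw0 1 0 1 1 (by simp) (by simp) h
    exact (by decide : ∀ c : ZMod 3, ¬(c * 1 = 1 ∧ c * 1 = 0)) c ⟨h1, h2⟩
  have hx14 : Projectivization.mk (ZMod 3) u hu0
      ≠ Projectivization.mk (ZMod 3) (u + (2 : ZMod 3) • w) hu2w0 := by
    intro h
    obtain ⟨c, h1, h2⟩ := keydist' u (u + (2 : ZMod 3) • w) hu0 hu2w0 1 0 1 2 (by simp) (by simp) h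
    exact (by decide : ∀ c : ZMod 3, ¬(c * 1 = 1 ∧ c * 2 = 0)) c ⟨h1, h2⟩
  have hx23 : Projectivization.mk (ZMod 3) w hw0 ≠ Projectivization.mk (ZMod 3) (u + w) huw0 := by
    intro h
    obtain ⟨c, h1, h2⟩ := keydist' w (u + w) hw0 huw0 0 1 1 1 (by simp) (by simp) h
    exact (by decide : ∀ c : ZMod 3, ¬(c * 1 = 0 ∧ c * 1 = 1)) c ⟨h1, h2⟩
  have hx24 : Projectivization.mk (ZMod 3) w hw0
      ≠ Projectivization.mk (ZMod 3) (u + (2 : ZMod 3) • w) hu2w0 := by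
    intro h
    obtain ⟨c, h1, h2⟩ := keydist' w (u + (2 : ZMod 3) • w) hw0 hu2w0 0 1 1 2 (by simp) (by simp) h
    exact (by decide : ∀ c : ZMod 3, ¬(c * 1 = 0 ∧ c * 2 = 1)) c ⟨h1, h2⟩
  have hx34 : Projectivization.mk (ZMod 3) (u + w) huw0
      ≠ Projectivization.mk (ZMod 3) (u + (2 : ZMod 3) • w) hu2w0 := by
    intro h
    obtain ⟨c, h1, h2⟩ := keydist' (u + w) (u + (2 : ZMod 3) • w) huw0 hu2w0 1 1 1 2
      (by simp) (by simp) h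
    exact (by decide : ∀ c : ZMod 3, ¬(c * 1 = 1 ∧ c * 2 = 1)) c ⟨h1, h2⟩
  -- span equations
  have e1 : (c3 * c1⁻¹) • vv i1 = c3 • u := by
    rw [← hc1, smul_smul, mul_assoc, inv_mul_cancel₀ hc1z, mul_one]
  have e2 : (c3 * c2⁻¹) • vv i2 = c3 • w := by
    rw [← hc2, smul_smul, mul_assoc, inv_mul_cancel₀ hc2z, mul_one]
  have e3 : (c4 * c1⁻¹) • vv i1 = c4 • u := by
    rw [← hc1, smul_smul, mul_assoc, inv_mul_cancel₀ hc1z, mul_one]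
  have e4 : ((c4 * 2) * c2⁻¹) • vv i2 = (c4 * 2) • w := by
    rw [← hc2, smul_smul, mul_assoc, inv_mul_cancel₀ hc2z, mul_one]
  apply P4 i1 i2 i3 i4
  refine ⟨?_, ?_, ?_, ?_, ?_, ?_,
      ⟨c3 * c1⁻¹, c3 * c2⁻¹, by rw [e1, e2, ← smul_add, hc3]⟩,
      ⟨c4 * c1⁻¹, (c4 * 2) * c2⁻¹, by rw [e3, e4, mul_smul c4 (2 : ZMod 3) w, ← smul_add, hc4]⟩⟩
  · intro h; apply hx12; rw [← hf1, ← hf2, h]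
  · intro h; apply hx13; rw [← hf1, ← hf3, h]
  · intro h; apply hx14; rw [← hf1, ← hf4, h]
  · intro h; apply hx23; rw [← hf2, ← hf3, h]
  · intro h; apply hx24; rw [← hf2, ← hf4, h]
  · intro h; apply hx34; rw [← hf3, ← hf4, h]

theorem statement_6 :
    ∃ B : Set (Projectivization (ZMod 3) (Fin (3 + 1) → ZMod 3)),
      B.ncard = 8 ∧ IsMinimalBlockingSet B ∧
      -- nontrivial: `B` contains no line of `PG(3,3)`
      ¬ ∃ W : Submodule (ZMod 3) (Fin (3 + 1) → ZMod 3),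
          Module.finrank (ZMod 3) W = 2 ∧
          {x : Projectivization (ZMod 3) (Fin (3 + 1) → ZMod 3) | x.rep ∈ W} ⊆ B := by
  exact ⟨BB, BB_ncard, BB_minimal, BB_noline⟩
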